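/- In any cyclic operad P, for x with ‖x‖ = n and y with ‖y‖ = m with the composition defined, (τ_{n+m}^i)^*(x ∘_i^j y) = ((τ_{n+1}^i)^* x) ∘_0^j y. -/

import Mathlib

open CategoryTheory MonoidalCategory

universe w v u

/-- The profile `c̄ σ = c_{σ(0)}, …, c_{σ(n)}` obtained by permuting a profile (a list). -/
def permuteList {C : Type u} (c : List C) {n : ℕ} (h : c.length = n)
    (σ : Equiv.Perm (Fin n)) : List C :=
  List.ofFn fun k => c.get (Fin.cast h.symm (σ k))

/-- The composite profile `c̄ ∘_i^j d̄ = c_0,…,c_{i-1}, d_{j+1},…,d_m, d_0,…,d_{j-1},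
c_{i+1},…,c_n`. -/
def profComp {C : Type u} (c d : List C) (i j : ℕ) : List C :=
  c.take i ++ (d.drop (j + 1) ++ (d.take j ++ c.drop (i + 1)))

/-- The helper function `α_{i,m}` : identity on `[0,i-1]`, `x ↦ x - 1 + m` on `[i+1,n]`. -/
def alphaN (i m x : ℕ) : ℕ := if x < i then x else x + m - 1

/-- The helper function `β_{j,i}` : `x ↦ x + m - j + i` on `[0,j-1]`, `x ↦ x - j - 1 + i`
on `[j+1,m]`. -/
def betaN (m j i x : ℕ) : ℕ := if x < j then x + m + i - j else x + i - j - 1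

/-- The underlying data of a (colored) cyclic operad in a monoidal category `V`, *without*
identity elements: an involutive color set, objects `P(c_0,…,c_n)` of `V` indexed by
profiles, a right action of `Σ_n^+ = Aut([0,n])`, and composition operations `∘_i^j`
defined when `c_i = d_j^†`. -/
structure VCycDataNU (C : Type u) (V : Type v) [Category.{w} V] [MonoidalCategory V] where
  dag : C → C
  dag_invol : Function.Involutive dag
  P : List C → V
  act : ∀ {c : List C} {n : ℕ} (h : c.length = n) (σ : Equiv.Perm (Fin n)),
    P c ⟶ P (permuteList c h σ)
  comp : ∀ {c d : List C} (i j : ℕ) (hi : i < c.length) (hj : j < d.length),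
    c.get ⟨i, hi⟩ = dag (d.get ⟨j, hj⟩) → (P c ⊗ P d ⟶ P (profComp c d i j))

/-- The underlying data of a (colored) cyclic operad in `V`: the non-unital data together
with identity elements `id_c : 𝟙_V → P(c^†, c)`. -/
structure VCycData (C : Type u) (V : Type v) [Category.{w} V] [MonoidalCategory V] extends
    VCycDataNU C V where
  ident : ∀ c : C, (𝟙_ V ⟶ P [dag c, c])

variable {C : Type u} {V : Type v} [Category.{w} V] [MonoidalCategory V] [SymmetricCategory V]

/-- Axioms (C.1), (C.2), (C.3) of a cyclic operad (together with functoriality of the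
symmetric group actions): a *non-unital Markl cyclic operad*. -/
structure IsVMarkl (D : VCycDataNU C V) : Prop where
  act_one : ∀ {c : List C} {n : ℕ} (h : c.length = n) (hl : permuteList c h 1 = c),
    D.act h 1 = eqToHom (congrArg D.P hl.symm)
  act_mul : ∀ {c : List C} {n : ℕ} (h : c.length = n) (σ σ' : Equiv.Perm (Fin n))
    (h2 : (permuteList c h σ).length = n)
    (hl : permuteList (permuteList c h σ) h2 σ' = permuteList c h (σ * σ')),
    D.act h σ ≫ D.act h2 σ' = D.act h (σ * σ') ≫ eqToHom (congrArg D.P hl.symm)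
  /- (C.1): `(τ^{m-j+i})^* (x ∘_i^j y) = y ∘_j^i x`. -/
  swap : ∀ {c d : List C} (i j : ℕ) (hi : i < c.length) (hj : j < d.length)
    (hcd : c.get ⟨i, hi⟩ = D.dag (d.get ⟨j, hj⟩))
    (hdc : d.get ⟨j, hj⟩ = D.dag (c.get ⟨i, hi⟩))
    (hlen : (profComp c d i j).length = c.length + d.length - 2)
    (hl : permuteList (profComp c d i j) hlen
        ((finRotate (c.length + d.length - 2)) ^ (d.length - 1 - j + i)) = profComp d c j i),
    D.comp i j hi hj hcd ≫
        D.act hlen ((finRotate (c.length + d.length - 2)) ^ (d.length - 1 - j + i)) ≫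
        eqToHom (congrArg D.P hl)
      = (β_ (D.P c) (D.P d)).hom ≫ D.comp j i hj hi hdc
  /- (C.2): `(x ∘_i^j y) ∘_{β_{j,i}(k)}^{l} z = x ∘_i^{α_{k,p}(j)} (y ∘_k^l z)` for `k ≠ j`,
  whenever the indicated compositions are defined. -/
  assoc : ∀ {c d e : List C} (i j k l : ℕ) (hi : i < c.length) (hj : j < d.length)
    (hk : k < d.length) (hl : l < e.length) (_ : k ≠ j)
    (h1 : c.get ⟨i, hi⟩ = D.dag (d.get ⟨j, hj⟩))
    (h2 : d.get ⟨k, hk⟩ = D.dag (e.get ⟨l, hl⟩))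
    (hb : betaN (d.length - 1) j i k < (profComp c d i j).length)
    (hcol1 : (profComp c d i j).get ⟨betaN (d.length - 1) j i k, hb⟩ = D.dag (e.get ⟨l, hl⟩))
    (ha : alphaN k (e.length - 1) j < (profComp d e k l).length)
    (hcol2 : c.get ⟨i, hi⟩ = D.dag ((profComp d e k l).get ⟨alphaN k (e.length - 1) j, ha⟩))
    (hlist : profComp c (profComp d e k l) i (alphaN k (e.length - 1) j)
      = profComp (profComp c d i j) e (betaN (d.length - 1) j i k) l),
    (D.comp i j hi hj h1 ▷ D.P e) ≫ D.comp (betaN (d.length - 1) j i k) l hb hl hcol1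
      = (α_ (D.P c) (D.P d) (D.P e)).hom ≫ (D.P c ◁ D.comp k l hk hl h2) ≫
          D.comp i (alphaN k (e.length - 1) j) hi ha hcol2 ≫ eqToHom (congrArg D.P hlist)
  /- (C.3): `(σ₁^* x) ∘_i^j (σ₂^* y) = σ^* (x ∘_{σ₁(i)}^{σ₂(j)} y)` where `σ` is determined
  by `σ ∘ (α_{i,m} ⊔ β_{j,i}) = (α_{σ₁(i),m} ⊔ β_{σ₂(j),σ₁(i)}) ∘ (σ₁ ⊔ σ₂)`. -/
  equiv : ∀ {c d : List C} {nc nd : ℕ} (h1 : c.length = nc) (h2 : d.length = nd)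
    (σ₁ : Equiv.Perm (Fin nc)) (σ₂ : Equiv.Perm (Fin nd)) (i : Fin nc) (j : Fin nd)
    (σ : Equiv.Perm (Fin (nc + nd - 2)))
    (_ : ∀ (x : Fin nc), x ≠ i → ∀ (hax : alphaN i.val (nd - 1) x.val < nc + nd - 2),
      (σ ⟨alphaN i.val (nd - 1) x.val, hax⟩).val = alphaN (σ₁ i).val (nd - 1) (σ₁ x).val)
    (_ : ∀ (x : Fin nd), x ≠ j → ∀ (hbx : betaN (nd - 1) j.val i.val x.val < nc + nd - 2),
      (σ ⟨betaN (nd - 1) j.val i.val x.val, hbx⟩).val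
        = betaN (nd - 1) (σ₂ j).val (σ₁ i).val (σ₂ x).val)
    (hip : i.val < (permuteList c h1 σ₁).length) (hjp : j.val < (permuteList d h2 σ₂).length)
    (hcolp : (permuteList c h1 σ₁).get ⟨i.val, hip⟩
      = D.dag ((permuteList d h2 σ₂).get ⟨j.val, hjp⟩))
    (hi0 : (σ₁ i).val < c.length) (hj0 : (σ₂ j).val < d.length)
    (hcol0 : c.get ⟨(σ₁ i).val, hi0⟩ = D.dag (d.get ⟨(σ₂ j).val, hj0⟩))
    (hlen : (profComp c d (σ₁ i).val (σ₂ j).val).length = nc + nd - 2)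
    (hlist : permuteList (profComp c d (σ₁ i).val (σ₂ j).val) hlen σ
      = profComp (permuteList c h1 σ₁) (permuteList d h2 σ₂) i.val j.val),
    (D.act h1 σ₁ ⊗ₘ D.act h2 σ₂) ≫ D.comp i.val j.val hip hjp hcolp
      = D.comp (σ₁ i).val (σ₂ j).val hi0 hj0 hcol0 ≫ D.act hlen σ ≫
          eqToHom (congrArg D.P hlist)

/-- The axioms (C.1)–(C.4) of a (colored) cyclic operad in `V`. -/
structure IsVCyc (D : VCycData C V) : Prop where
  markl : IsVMarkl D.toVCycDataNU
  /- (C.4), first half: `x ∘_i^1 id_c = x`. -/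
  unit : ∀ {c : List C} (i : ℕ) (hi : i < c.length) (cc : C)
    (h2 : 1 < ([D.dag cc, cc] : List C).length)
    (hcol : c.get ⟨i, hi⟩ = D.dag (([D.dag cc, cc] : List C).get ⟨1, h2⟩))
    (hlist : c = profComp c [D.dag cc, cc] i 1),
    (ρ_ (D.P c)).inv ≫ (D.P c ◁ D.ident cc) ≫ D.comp i 1 hi h2 hcol
      = eqToHom (congrArg D.P hlist)
  /- (C.4), second half: `τ^* id_c = id_{c^†}`. -/
  tau_ident : ∀ (cc : C) (h : ([D.dag cc, cc] : List C).length = 2)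
    (hl : permuteList [D.dag cc, cc] h (finRotate 2) = [D.dag (D.dag cc), D.dag cc]),
    D.ident cc ≫ D.act h (finRotate 2) = D.ident (D.dag cc) ≫ eqToHom (congrArg D.P hl.symm)


section Aux

lemma finRotate_pow_val {n : ℕ} (hn : 0 < n) (k : ℕ) (x : Fin n) :
    (((finRotate n) ^ k) x).val = (x.val + k) % n := by
  obtain ⟨m, rfl⟩ := Nat.exists_eq_succ_of_ne_zero hn.ne'
  induction k generalizing x with
  | zero => simp [Nat.mod_eq_of_lt x.isLt]
  | succ k ih =>
    rw [pow_succ, Equiv.Perm.mul_apply, ih, finRotate_succ_apply, Fin.add_def]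
    rw [Nat.mod_add_mod]
    have h1 : (1 : Fin (m+1)).val = 1 % (m+1) := Fin.val_one' (m+1)
    rw [h1]
    have h2 : x.val + (k+1) = x.val + 1 + k := by omega
    rw [h2]
    exact (((Nat.mod_modEq 1 (m+1)).add_left x.val).add_right k)

lemma permuteList_one {C : Type u} (c : List C) :
    permuteList c rfl (1 : Equiv.Perm (Fin c.length)) = c := by
  simp [permuteList, List.ofFn_get]

variable {C : Type u} {V : Type v} [Category.{w} V] [MonoidalCategory V]

lemma whiskerLeft_eqToHom' (X : V) {A B : V} (h : A = B) :
    X ◁ eqToHom h = eqToHom (congrArg (X ⊗ ·) h) := by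
  subst h; simp

lemma comp_congr (D : VCycDataNU C V) {c d d' : List C} (hd : d' = d) (i j : ℕ)
    (hi : i < c.length) (hj : j < d'.length) (hj2 : j < d.length)
    (hcd : c.get ⟨i, hi⟩ = D.dag (d'.get ⟨j, hj⟩))
    (hcd2 : c.get ⟨i, hi⟩ = D.dag (d.get ⟨j, hj2⟩)) :
    D.comp i j hi hj hcd
      = (D.P c ◁ eqToHom (congrArg D.P hd)) ≫ D.comp i j hi hj2 hcd2 ≫
          eqToHom (congrArg D.P (by rw [hd])) := by
  subst hd; simp

lemma conj_congr (D : VCycDataNU C V) {c d : List C} {i i' j j' : ℕ}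
    (hii : i' = i) (hjj : j' = j)
    (hi : i < c.length) (hi' : i' < c.length) (hj : j < d.length) (hj' : j' < d.length)
    (hcd : c.get ⟨i, hi⟩ = D.dag (d.get ⟨j, hj⟩))
    (hcd' : c.get ⟨i', hi'⟩ = D.dag (d.get ⟨j', hj'⟩))
    {N : ℕ} (hlen : (profComp c d i j).length = N) (hlen' : (profComp c d i' j').length = N)
    (σ : Equiv.Perm (Fin N)) {T : V}
    (e : D.P (permuteList (profComp c d i j) hlen σ) = T)
    (e' : D.P (permuteList (profComp c d i' j') hlen' σ) = T) :
    D.comp i' j' hi' hj' hcd' ≫ D.act hlen' σ ≫ eqToHom e'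
      = D.comp i j hi hj hcd ≫ D.act hlen σ ≫ eqToHom e := by
  subst hii; subst hjj; rfl

end Aux
/-- in any cyclic operad, `(τ_{n+m}^i)^*(x ∘_i^j y) = ((τ_{n+1}^i)^* x) ∘_0^j y`
(where `‖x‖ = n`, `‖y‖ = m`, so `c̄` has length `n+1`, `d̄` has length `m+1`, and the
composite has length `n+m = |c̄| + |d̄| - 2`). -/
theorem act_comp_eq_comp_act_zero {C : Type u} {V : Type v} [Category.{w} V]
    [MonoidalCategory V] [SymmetricCategory V] [MonoidalClosed V]
    (D : VCycData C V) (_ : IsVCyc D) {c d : List C} (i j : ℕ)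
    (hi : i < c.length) (hj : j < d.length)
    (hcol : c.get ⟨i, hi⟩ = D.dag (d.get ⟨j, hj⟩))
    (hlen : (profComp c d i j).length = c.length + d.length - 2)
    (h0 : 0 < (permuteList c rfl ((finRotate c.length) ^ i)).length)
    (hcol' : (permuteList c rfl ((finRotate c.length) ^ i)).get ⟨0, h0⟩
      = D.dag (d.get ⟨j, hj⟩))
    (hlist : profComp (permuteList c rfl ((finRotate c.length) ^ i)) d 0 j
      = permuteList (profComp c d i j) hlen
          ((finRotate (c.length + d.length - 2)) ^ i)) :
    D.comp i j hi hj hcol ≫ D.act hlen ((finRotate (c.length + d.length - 2)) ^ i)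
      = (D.act rfl ((finRotate c.length) ^ i) ▷ D.P d) ≫ D.comp 0 j h0 hj hcol' ≫
          eqToHom (congrArg D.P hlist) := by
  rename_i hcyc
  have hM := hcyc.markl
  have hnc : 0 < c.length := lt_of_le_of_lt (Nat.zero_le i) hi
  have hnd : 0 < d.length := lt_of_le_of_lt (Nat.zero_le j) hj
  have hpd : permuteList d rfl (1 : Equiv.Perm (Fin d.length)) = d := permuteList_one d
  set σ₁ : Equiv.Perm (Fin c.length) := (finRotate c.length) ^ i with hσ₁
  set σ : Equiv.Perm (Fin (c.length + d.length - 2)) :=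
    (finRotate (c.length + d.length - 2)) ^ i with hσ
  have hv : (σ₁ ⟨0, hnc⟩).val = i := by
    rw [hσ₁, finRotate_pow_val hnc]
    simpa using Nat.mod_eq_of_lt hi
  have condA : ∀ (x : Fin c.length), x ≠ ⟨0, hnc⟩ →
      ∀ (hax : alphaN 0 (d.length - 1) x.val < c.length + d.length - 2),
      (σ ⟨alphaN 0 (d.length - 1) x.val, hax⟩).val
        = alphaN (σ₁ ⟨0, hnc⟩).val (d.length - 1) (σ₁ x).val := by
    intro x hx hax
    have hxv : 0 < x.val := Nat.pos_of_ne_zero (fun h => hx (Fin.ext h))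
    have hxlt := x.isLt
    have hN : 0 < c.length + d.length - 2 := lt_of_le_of_lt (Nat.zero_le _) hax
    have hx1 : (σ₁ x).val = (x.val + i) % c.length := by
      rw [hσ₁]; exact finRotate_pow_val hnc i x
    rw [hσ, finRotate_pow_val hN, hv, hx1]
    simp only [alphaN, Nat.not_lt_zero, if_false]
    rcases lt_or_ge (x.val + i) c.length with hca | hca
    · rw [Nat.mod_eq_of_lt hca, if_neg (by omega), Nat.mod_eq_of_lt (by omega)]
      omega
    · have h1 : (x.val + i) % c.length = x.val + i - c.length := by
        rw [Nat.mod_eq_sub_mod hca]; exact Nat.mod_eq_of_lt (by omega)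
      have h2 : (x.val + (d.length - 1) - 1 + i) % (c.length + d.length - 2)
          = x.val + (d.length - 1) - 1 + i - (c.length + d.length - 2) := by
        rw [Nat.mod_eq_sub_mod (by omega)]; exact Nat.mod_eq_of_lt (by omega)
      rw [h1, h2, if_pos (by omega)]
      omega
  have condB : ∀ (x : Fin d.length), x ≠ ⟨j, hj⟩ →
      ∀ (hbx : betaN (d.length - 1) j 0 x.val < c.length + d.length - 2),
      (σ ⟨betaN (d.length - 1) j 0 x.val, hbx⟩).val
        = betaN (d.length - 1) j (σ₁ ⟨0, hnc⟩).val x.val := by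
    intro x hx hbx
    have hxlt := x.isLt
    have hN : 0 < c.length + d.length - 2 := lt_of_le_of_lt (Nat.zero_le _) hbx
    have hxj : x.val ≠ j := fun h => hx (Fin.ext h)
    rw [hσ, finRotate_pow_val hN, hv]
    simp only [betaN]
    rcases Nat.lt_or_ge x.val j with hcb | hcb
    · rw [if_pos hcb, if_pos hcb, Nat.mod_eq_of_lt (by omega)]
      omega
    · rw [if_neg (by omega), if_neg (by omega), Nat.mod_eq_of_lt (by omega)]
      omega
  have hip : 0 < (permuteList c rfl σ₁).length := by simpa [permuteList] using hnc
  have hjp : j < (permuteList d rfl (1 : Equiv.Perm (Fin d.length))).length := by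
    simpa [permuteList] using hj
  have hcolp : (permuteList c rfl σ₁).get ⟨0, hip⟩
      = D.dag ((permuteList d rfl (1 : Equiv.Perm (Fin d.length))).get ⟨j, hjp⟩) := by
    rw [List.get_of_eq hpd]
    exact hcol'
  have hi0 : (σ₁ ⟨0, hnc⟩).val < c.length := (σ₁ ⟨0, hnc⟩).isLt
  have hj0 : j < d.length := hj
  have hcol0 : c.get ⟨(σ₁ ⟨0, hnc⟩).val, hi0⟩ = D.dag (d.get ⟨j, hj0⟩) := by
    simp only [hv]; exact hcol
  have hlen2 : (profComp c d (σ₁ ⟨0, hnc⟩).val j).length = c.length + d.length - 2 := by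
    simp only [hv]; exact hlen
  have hlist2 : permuteList (profComp c d (σ₁ ⟨0, hnc⟩).val j) hlen2 σ
      = profComp (permuteList c rfl σ₁) (permuteList d rfl (1 : Equiv.Perm (Fin d.length)))
          0 j := by
    simp only [hv, hpd]
    exact hlist.symm
  have key := hM.equiv (h1 := rfl) (h2 := rfl) σ₁ 1 ⟨0, hnc⟩ ⟨j, hj⟩ σ condA condB
    hip hjp hcolp hi0 hj0 hcol0 hlen2 hlist2
  have e : D.P (permuteList (profComp c d i j) hlen σ)
      = D.P (profComp (permuteList c rfl σ₁)
          (permuteList d rfl (1 : Equiv.Perm (Fin d.length))) 0 j) :=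
    congrArg D.P (hlist.symm.trans (by rw [hpd]))
  have key2 := key.trans (conj_congr D.toVCycDataNU hv rfl hi hi0 hj hj0 hcol hcol0
    hlen hlen2 σ e (congrArg D.P hlist2))
  rw [hM.act_one rfl hpd] at key2
  rw [comp_congr D.toVCycDataNU hpd 0 j hip hjp hj hcolp hcol'] at key2
  simp only [MonoidalCategory.tensorHom_def, Category.assoc, whiskerLeft_eqToHom',
    eqToHom_trans, eqToHom_trans_assoc, eqToHom_refl, Category.id_comp,
    Category.comp_id] at key2
  rw [← cancel_mono (eqToHom e)]
  simp only [Category.assoc, eqToHom_trans]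
  exact key2.symm
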